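/- arXiv:2410.01372 — 6 statements merged into one kernel-verified Lean document; each statement's English description precedes it below -/
import Mathlib

section
/- Let R1, R2 > 0, w, t1, t2, t3, t4 be real numbers, and let A be the 4×4 real matrix with rows ((0, (w t1 - t4)/R1, 0, -t3/R1), (-(w t1 - t4)/R1, 0, t3/R1, 0), (0, t3/R2, 0, (w t2 + t4)/R2), (-t3/R2, 0, -(w t2 + t4)/R2, 0)). If t4 = (w(t1 R2 - t2 R1) + 2 t3 √(R1 R2))/(R1 + R2), then the characteristic polynomial of A equals (λ² + α²)², where α = (w(t1+t2)√(R1 R2) + t3(R1 - R2))/(√(R1 R2)(R1+R2)). -/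
open Matrix Polynomial

theorem aux (a b c d : ℝ) :
    (!![0, a, 0, -b; -a, 0, b, 0; 0, c, 0, d; -c, 0, -d, 0] : Matrix (Fin 4) (Fin 4) ℝ).charpoly
    = X^4 + C (a^2 + d^2 - 2*b*c) * X^2 + C ((a*d + b*c)^2) := by
  rw [Matrix.charpoly]
  simp [Matrix.det_succ_row_zero, Fin.sum_univ_succ, charmatrix_apply, Matrix.one_apply,
    Matrix.diagonal_apply, Fin.succAbove]
  rw [map_ofNat]; ring

theorem stmt0 (R1 R2 w t1 t2 t3 t4 : ℝ) (hR1 : 0 < R1) (hR2 : 0 < R2)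
    (ht4 : t4 = (w * (t1 * R2 - t2 * R1) + 2 * t3 * Real.sqrt (R1 * R2)) / (R1 + R2)) :
    (!![0, (w * t1 - t4) / R1, 0, -t3 / R1;
        -(w * t1 - t4) / R1, 0, t3 / R1, 0;
        0, t3 / R2, 0, (w * t2 + t4) / R2;
        -t3 / R2, 0, -(w * t2 + t4) / R2, 0] : Matrix (Fin 4) (Fin 4) ℝ).charpoly
      = (X ^ 2 + C (((w * (t1 + t2) * Real.sqrt (R1 * R2) + t3 * (R1 - R2)) /
          (Real.sqrt (R1 * R2) * (R1 + R2))) ^ 2)) ^ 2 := by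
  have hs0 : 0 < Real.sqrt (R1 * R2) := Real.sqrt_pos.2 (by positivity)
  set s := Real.sqrt (R1 * R2) with hsdef
  have hs : s * s = R1 * R2 := Real.mul_self_sqrt (by positivity)
  have hR2e : R2 = s ^ 2 / R1 := by
    rw [eq_div_iff hR1.ne']
    linear_combination -hs
  simp only [neg_div]
  rw [aux]
  set α : ℝ := (w * (t1 + t2) * s + t3 * (R1 - R2)) / (s * (R1 + R2)) with hα
  have h2 : (w * t1 - t4) / R1 * ((w * t2 + t4) / R2) + t3 / R1 * (t3 / R2) = α ^ 2 := by
    rw [hα, ht4, hR2e]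
    have h1n : R1 ≠ 0 := hR1.ne'
    have hsn : s ≠ 0 := hs0.ne'
    have hd : R1 + s ^ 2 / R1 ≠ 0 := by positivity
    field_simp
    ring
  have h1 : ((w * t1 - t4) / R1) ^ 2 + ((w * t2 + t4) / R2) ^ 2 - 2 * (t3 / R1) * (t3 / R2)
      = 2 * α ^ 2 := by
    rw [hα, ht4, hR2e]
    have h1n : R1 ≠ 0 := hR1.ne'
    have hsn : s ≠ 0 := hs0.ne'
    have hd : R1 + s ^ 2 / R1 ≠ 0 := by positivity
    field_simp
    ring
  rw [h1, h2]
  simp only [C_mul, C_pow, map_ofNat]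
  ring
end

section
/- Under the hypotheses of the previous setup, the semisimple and nilpotent parts are explicitly: S is the block matrix with S[1,2] = α, S[2,1] = -α, S[3,4] = α, S[4,3] = -α and all other entries zero; and N has entries N[1,2] = -t3/√(R1 R2), N[2,1] = t3/√(R1 R2), N[1,4] = -t3/R1, N[2,3] = t3/R1, N[3,2] = t3/R2, N[4,1] = -t3/R2, N[3,4] = t3/√(R1 R2), N[4,3] = -t3/√(R1 R2), and zero elsewhere. Then A = S + N, SN = NS, and N² = 0. -/
open Matrix

set_option maxHeartbeats 1000000 in
theorem stmt2 (R1 R2 w t1 t2 t3 t4 α : ℝ) (hR1 : 0 < R1) (hR2 : 0 < R2) (ht3 : t3 ≠ 0)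
    (ht4 : t4 = (w * (t1 * R2 - t2 * R1) + 2 * t3 * Real.sqrt (R1 * R2)) / (R1 + R2))
    (hα : α = (w * (t1 + t2) * Real.sqrt (R1 * R2) + t3 * (R1 - R2)) /
      (Real.sqrt (R1 * R2) * (R1 + R2)))
    (A S N : Matrix (Fin 4) (Fin 4) ℝ)
    (hA : A = !![0, (w * t1 - t4) / R1, 0, -t3 / R1;
        -(w * t1 - t4) / R1, 0, t3 / R1, 0;
        0, t3 / R2, 0, (w * t2 + t4) / R2;
        -t3 / R2, 0, -(w * t2 + t4) / R2, 0])
    (hSm : S = !![0, α, 0, 0;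
        -α, 0, 0, 0;
        0, 0, 0, α;
        0, 0, -α, 0])
    (hNm : N = !![0, -t3 / Real.sqrt (R1 * R2), 0, -t3 / R1;
        t3 / Real.sqrt (R1 * R2), 0, t3 / R1, 0;
        0, t3 / R2, 0, t3 / Real.sqrt (R1 * R2);
        -t3 / R2, 0, -t3 / Real.sqrt (R1 * R2), 0]) :
    A = S + N ∧ S * N = N * S ∧ N ^ 2 = 0 := by
  have hs0 : 0 < Real.sqrt (R1 * R2) := Real.sqrt_pos.mpr (by positivity)
  set s := Real.sqrt (R1 * R2) with hsdef
  have hs2 : s * s = R1 * R2 := Real.mul_self_sqrt (by positivity)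
  have hsne : s ≠ 0 := ne_of_gt hs0
  have hR1ne : R1 ≠ 0 := ne_of_gt hR1
  have hR2ne : R2 ≠ 0 := ne_of_gt hR2
  have hRR : R1 + R2 ≠ 0 := by positivity
  subst hA hSm hNm ht4 hα
  refine ⟨?_, ?_, ?_⟩
  · ext i j
    fin_cases i <;> fin_cases j <;>
      simp [Matrix.vecHead, Matrix.vecTail] <;>
      field_simp <;>
      first
        | linear_combination ((R1+R2)*(-2*t3*s))*hs2
        | linear_combination ((R1+R2)*(2*t3*s))*hs2
        | linear_combination (2*t3*s)*hs2
        | linear_combination (-2*t3*s)*hs2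
        | linear_combination (2*t3)*hs2
        | linear_combination (-2*t3)*hs2
        | ring
  · ext i j
    fin_cases i <;> fin_cases j <;>
      simp [Matrix.mul_apply, Fin.sum_univ_four, Matrix.vecHead, Matrix.vecTail] <;>
      ring
  · ext i j
    fin_cases i <;> fin_cases j <;>
      simp [pow_two, Matrix.mul_apply, Fin.sum_univ_four, Matrix.vecHead, Matrix.vecTail] <;>
      field_simp <;>
      first
        | linear_combination (t3*t3)*hs2
        | linear_combination (-(t3*t3))*hs2
        | ring
end

section
/- With the symplectic basis P = col(f, (1/α)Sf, Nf, (1/α)SNf) as above, the conjugated matrix P⁻¹ A P, where A = S + N is the Gaudin linearisation at m0 at the bifurcation value t4 = t4^+_{m0}, equals the 4×4 matrix ((0,-α,0,0),(α,0,0,0),(1,0,0,-α),(0,1,α,0)), which is the linear normal form of a Hamiltonian Hopf bifurcation. -/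
set_option maxHeartbeats 1600000

open Matrix

theorem stmt7 (R1 R2 w t1 t2 t3 α β : ℝ) (hR1 : 0 < R1) (hR2 : 0 < R2) (ht3 : t3 ≠ 0)
    (hα : α = (w * (t1 + t2) * Real.sqrt (R1 * R2) + t3 * (R1 - R2)) /
      (Real.sqrt (R1 * R2) * (R1 + R2)))
    (hα0 : α ≠ 0)
    (hβ : β = (1 / 2) * (R1 * R2 * t3 ^ 2) ^ (-(1 / 4 : ℝ)))
    (S N : Matrix (Fin 4) (Fin 4) ℝ)
    (hS : S = !![0, α, 0, 0;
        -α, 0, 0, 0;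
        0, 0, 0, α;
        0, 0, -α, 0])
    (hN : N = !![0, -t3 / Real.sqrt (R1 * R2), 0, -t3 / R1;
        t3 / Real.sqrt (R1 * R2), 0, t3 / R1, 0;
        0, t3 / R2, 0, t3 / Real.sqrt (R1 * R2);
        -t3 / R2, 0, -t3 / Real.sqrt (R1 * R2), 0])
    (f : Fin 4 → ℝ)
    (hf : f = fun i => β * ![Real.sqrt R2, 0, Real.sqrt R1, 0] i)
    (P : Matrix (Fin 4) (Fin 4) ℝ)
    (hP : P = Matrix.of fun i j =>
      ![f, (1 / α) • (S *ᵥ f), N *ᵥ f, (1 / α) • (S *ᵥ (N *ᵥ f))] j i) :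
    P⁻¹ * (S + N) * P = !![0, -α, 0, 0;
        α, 0, 0, 0;
        1, 0, 0, -α;
        0, 1, α, 0] := by
  set s1 := Real.sqrt R1 with hs1
  set s2 := Real.sqrt R2 with hs2
  have hs1p : 0 < s1 := Real.sqrt_pos.mpr hR1
  have hs2p : 0 < s2 := Real.sqrt_pos.mpr hR2
  have hs1n : s1 ≠ 0 := ne_of_gt hs1p
  have hs2n : s2 ≠ 0 := ne_of_gt hs2p
  have hsr : Real.sqrt (R1 * R2) = s1 * s2 := Real.sqrt_mul hR1.le R2
  have hR1e : R1 = s1 * s1 := (Real.mul_self_sqrt hR1.le).symm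
  have hR2e : R2 = s2 * s2 := (Real.mul_self_sqrt hR2.le).symm
  have hβ0 : β ≠ 0 := by
    rw [hβ]
    positivity
  have hPeq : P = !![β*s2, 0, 0, 2*β*t3/s1;
      0, -(β*s2), 2*β*t3/s1, 0;
      β*s1, 0, 0, -(2*β*t3/s2);
      0, -(β*s1), -(2*β*t3/s2), 0] := by
    subst hP hf hN hS
    rw [hsr]
    ext i j
    fin_cases i <;> fin_cases j <;>
      simp [Matrix.mulVec, dotProduct, Fin.sum_univ_succ, hsr, hR1e, hR2e] <;>
      field_simp <;> ring
  have hM : (S + N) * P = P * !![0, -α, 0, 0;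
        α, 0, 0, 0;
        1, 0, 0, -α;
        0, 1, α, 0] := by
    subst hS hN
    rw [hsr]
    rw [hPeq]
    ext i j
    fin_cases i <;> fin_cases j <;>
      simp [Matrix.mul_apply, Fin.sum_univ_succ, hsr, hR1e, hR2e] <;>
      field_simp <;> ring
  have hd : P.det = 16 * β ^ 4 * t3 ^ 2 := by
    rw [hPeq]
    simp [Matrix.det_succ_row_zero, Fin.sum_univ_succ, Fin.castSucc, Fin.castAdd, Fin.castLE, Fin.succAbove]
    field_simp
    ring
  have hdet : IsUnit P.det := by
    rw [isUnit_iff_ne_zero, hd]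
    positivity
  calc P⁻¹ * (S + N) * P = P⁻¹ * ((S + N) * P) := by rw [Matrix.mul_assoc]
    _ = P⁻¹ * (P * _) := by rw [hM]
    _ = (P⁻¹ * P) * _ := by rw [Matrix.mul_assoc]
    _ = _ := by rw [Matrix.nonsing_inv_mul P hdet, Matrix.one_mul]
end

section
/- Let R1, R2 > 0, t3 ≠ 0 and define ν2(t4) = -((w t1 - t4)² R2² + (w t2 + t4)² R1² - 2 R1 R2 ((w t1 - t4)(w t2 + t4) + 2 t3²)) / (4 R1² R2²). Then ν2(t4^+_{m0}) = 0, where t4^+_{m0} = (w(t1 R2 - t2 R1) + 2 t3 √(R1 R2))/(R1 + R2), and dν2/dt4 evaluated at t4 = t4^+_{m0} equals -t3(R1 + R2)/(R1 R2)^{3/2}, which is nonzero. -/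
theorem stmt8 (R1 R2 w t1 t2 t3 : ℝ) (hR1 : 0 < R1) (hR2 : 0 < R2) (ht3 : t3 ≠ 0)
    (ν2 : ℝ → ℝ)
    (hν2 : ν2 = fun t4 =>
      -(((w * t1 - t4) ^ 2 * R2 ^ 2 + (w * t2 + t4) ^ 2 * R1 ^ 2 -
          2 * R1 * R2 * ((w * t1 - t4) * (w * t2 + t4) + 2 * t3 ^ 2)) /
        (4 * R1 ^ 2 * R2 ^ 2)))
    (t4p : ℝ)
    (ht4p : t4p = (w * (t1 * R2 - t2 * R1) + 2 * t3 * Real.sqrt (R1 * R2)) / (R1 + R2)) :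
    ν2 t4p = 0 ∧
    deriv ν2 t4p = -(t3 * (R1 + R2)) / (R1 * R2) ^ ((3 : ℝ) / 2) ∧
    -(t3 * (R1 + R2)) / (R1 * R2) ^ ((3 : ℝ) / 2) ≠ 0 := by
  set s := Real.sqrt (R1 * R2) with hsdef
  have hRR : (0:ℝ) < R1 * R2 := mul_pos hR1 hR2
  have hsp : 0 < s := Real.sqrt_pos.mpr hRR
  have hs : s ^ 2 = R1 * R2 := Real.sq_sqrt hRR.le
  have hRsum : (0:ℝ) < R1 + R2 := by linarith
  have hA : w * t1 * R2 - w * t2 * R1 - t4p * (R1 + R2) = -(2 * t3 * s) := by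
    rw [ht4p]
    field_simp
    ring
  have hr : (R1 * R2) ^ ((3 : ℝ) / 2) = s ^ 3 := by
    rw [hsdef, Real.sqrt_eq_rpow,
      ← Real.rpow_natCast ((R1 * R2) ^ ((1:ℝ)/2)) 3, ← Real.rpow_mul hRR.le]
    norm_num
  have h1 : HasDerivAt (fun t : ℝ => w * t1 - t) (-1) t4p := by
    simpa using (hasDerivAt_id t4p).const_sub (w * t1)
  have h2 : HasDerivAt (fun t : ℝ => w * t2 + t) 1 t4p := by
    simpa using (hasDerivAt_id t4p).const_add (w * t2)
  have hN : HasDerivAt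
      (fun t : ℝ => (w * t1 - t) ^ 2 * R2 ^ 2 + (w * t2 + t) ^ 2 * R1 ^ 2 -
          2 * R1 * R2 * ((w * t1 - t) * (w * t2 + t) + 2 * t3 ^ 2))
      (4 * t3 * s * (R1 + R2)) t4p := by
    have h := (((h1.pow 2).mul_const (R2 ^ 2)).add ((h2.pow 2).mul_const (R1 ^ 2))).sub
      (((h1.mul h2).add_const (2 * t3 ^ 2)).const_mul (2 * R1 * R2))
    refine h.congr_deriv ?_
    linear_combination (-(2 * (R1 + R2))) * hA
  have hν : HasDerivAt ν2 (-(4 * t3 * s * (R1 + R2) / (4 * R1 ^ 2 * R2 ^ 2))) t4p := by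
    rw [hν2]
    exact (hN.div_const _).neg
  refine ⟨?_, ?_, ?_⟩
  · rw [hν2]
    simp only
    rw [neg_eq_zero, div_eq_zero_iff]
    left
    linear_combination (w * t1 * R2 - w * t2 * R1 - t4p * (R1 + R2) - 2 * t3 * s) * hA
      + 4 * t3 ^ 2 * hs
  · rw [hν.deriv, hr]
    field_simp
    linear_combination (-(s ^ 2 + R1 * R2)) * hs
  · rw [hr]
    exact div_ne_zero (neg_ne_zero.mpr (mul_ne_zero ht3 hRsum.ne')) (by positivity)
end

section
/- Let R1, R2 > 0 and w, t1, t2, t3, t4 ∈ ℝ with t4 = t4^±_{m0} := (w(t1 R2 - t2 R1) ± 2 t3 √(R1 R2))/(R1 + R2). Then the discriminant of the quadratic in μ = λ² obtained from the characteristic polynomial of the matrix A (rows as above) vanishes; equivalently, the characteristic polynomial of A has a repeated quadratic factor, so m0 is a degenerate singularity. -/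
open Matrix Polynomial

lemma charpoly_aux (α β s u : ℝ)
    (A : Matrix (Fin 4) (Fin 4) ℝ)
    (hA : A = !![0, α, 0, -s; -α, 0, s, 0; 0, u, 0, β; -u, 0, -β, 0]) :
    A.charpoly = X ^ 4 + C (α ^ 2 + β ^ 2 - 2 * s * u) * X ^ 2 + C ((α * β + s * u) ^ 2) := by
  subst hA
  rw [Matrix.charpoly]
  simp [Matrix.charmatrix_apply, Matrix.det_succ_row_zero,
    Fin.sum_univ_succ, Matrix.diagonal_apply, map_ofNat, Fin.zero_succAbove]
  simp [show (Fin.succAbove (3 : Fin 4) (2 : Fin 3)) = 2 from by decide,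
    show (Fin.succAbove (1 : Fin 4) (2 : Fin 3)) = 3 from by decide]
  ring

theorem stmt11 (R1 R2 w t1 t2 t3 t4 : ℝ) (hR1 : 0 < R1) (hR2 : 0 < R2)
    (ht4 : t4 = (w * (t1 * R2 - t2 * R1) + 2 * t3 * Real.sqrt (R1 * R2)) / (R1 + R2) ∨
           t4 = (w * (t1 * R2 - t2 * R1) - 2 * t3 * Real.sqrt (R1 * R2)) / (R1 + R2))
    (A : Matrix (Fin 4) (Fin 4) ℝ)
    (hA : A = !![0, (w * t1 - t4) / R1, 0, -t3 / R1;
        -(w * t1 - t4) / R1, 0, t3 / R1, 0;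
        0, t3 / R2, 0, (w * t2 + t4) / R2;
        -t3 / R2, 0, -(w * t2 + t4) / R2, 0]) :
    (∀ a b : ℝ, A.charpoly = X ^ 4 + C a * X ^ 2 + C b → a ^ 2 = 4 * b) ∧
    ∃ c : ℝ, A.charpoly = (X ^ 2 + C c) ^ 2 := by
  have h1 : R1 ≠ 0 := hR1.ne'
  have h2 : R2 ≠ 0 := hR2.ne'
  have hR12 : R1 + R2 ≠ 0 := by positivity
  set r := Real.sqrt (R1 * R2) with hrdef
  have hr : r ^ 2 = R1 * R2 := Real.sq_sqrt (by positivity)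
  have hA' : A = !![0, (w * t1 - t4) / R1, 0, -(t3 / R1);
      -((w * t1 - t4) / R1), 0, t3 / R1, 0;
      0, t3 / R2, 0, (w * t2 + t4) / R2;
      -(t3 / R2), 0, -((w * t2 + t4) / R2), 0] := by
    rw [hA, neg_div, neg_div, neg_div, neg_div]
  set a0 : ℝ := ((w * t1 - t4) / R1) ^ 2 + ((w * t2 + t4) / R2) ^ 2
      - 2 * (t3 / R1) * (t3 / R2) with ha0
  set b0 : ℝ := ((w * t1 - t4) / R1 * ((w * t2 + t4) / R2) + t3 / R1 * (t3 / R2)) ^ 2 with hb0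
  have hcp : A.charpoly = X ^ 4 + C a0 * X ^ 2 + C b0 :=
    charpoly_aux ((w * t1 - t4) / R1) ((w * t2 + t4) / R2) (t3 / R1) (t3 / R2) A hA'
  have hd : ((w * t1 - t4) / R1 - (w * t2 + t4) / R2) ^ 2 = 4 * (t3 / R1 * (t3 / R2)) := by
    rcases ht4 with h | h
    · have hN : (w * t1 - t4) * R2 - (w * t2 + t4) * R1 = -(2 * t3 * r) := by
        rw [h]; field_simp; ring
      field_simp
      linear_combination (((w * t1 - t4) * R2 - (w * t2 + t4) * R1 - 2 * t3 * r) * hN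
        + 4 * t3 ^ 2 * hr)
    · have hN : (w * t1 - t4) * R2 - (w * t2 + t4) * R1 = 2 * t3 * r := by
        rw [h]; field_simp; ring
      field_simp
      linear_combination (((w * t1 - t4) * R2 - (w * t2 + t4) * R1 + 2 * t3 * r) * hN
        + 4 * t3 ^ 2 * hr)
  have key : a0 ^ 2 = 4 * b0 := by
    rw [ha0, hb0]
    linear_combination ((w * t1 - t4) / R1 + (w * t2 + t4) / R2) ^ 2 * hd
  constructor
  · intro a b h
    rw [hcp] at h
    have ha : a = a0 := by
      have := congrArg (fun p => coeff p 2) h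
      simpa using this.symm
    have hb : b = b0 := by
      have := congrArg (fun p => coeff p 0) h
      simpa using this.symm
    rw [ha, hb]; exact key
  · refine ⟨a0 / 2, ?_⟩
    rw [hcp]
    have hc1 : C a0 = 2 * C (a0 / 2) := by
      conv_lhs => rw [show a0 = 2 * (a0 / 2) from by ring]
      rw [C_mul, map_ofNat]
    have hc2 : C b0 = C (a0 / 2) ^ 2 := by
      rw [show b0 = (a0 / 2) ^ 2 from by nlinarith [key], C_pow]
    rw [hc1, hc2]; ring
end

section
/- Let R1, R2 > 0 with R1 ≠ R2 and consider the trigonometric Gaudin model (w = 0) with t3 = -2(R1 + R2) t0 / √(R1 R2) and t0 ≠ 0. Then the coefficient a3 (of M²) in the normal form at t4 = t4^+_{m0} = 4 t0 vanishes, while the coefficient a6 of M³, given by a6 = (R1 - R2)² · ((R1 + R2)(R1 - R2)² t0) / (384 (R1 R2)² (R1 + R2)(R1 - R2)² t0) = (R1 - R2)²/(384 (R1 R2)²), is nonzero; hence the Hamiltonian Hopf bifurcation at m0 is degenerate. -/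
theorem stmt15 (R1 R2 t0 t3 : ℝ) (hR1 : 0 < R1) (hR2 : 0 < R2) (hR : R1 ≠ R2)
    (ht0 : t0 ≠ 0)
    (ht3 : t3 = -(2 * (R1 + R2) * t0) / Real.sqrt (R1 * R2))
    (a3 a6 : ℝ)
    (ha3 : a3 = (2 * (R1 - R2) ^ 2 * (R1 + R2) * t0 + (R1 - R2) ^ 2 * Real.sqrt (R1 * R2) * t3) /
      (8 * (R1 * R2) ^ ((3 : ℝ) / 2) * (R1 + R2) * t3))
    (ha6 : a6 = (R1 - R2) ^ 2 * ((R1 + R2) * (R1 - R2) ^ 2 * t0) /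
      (384 * (R1 * R2) ^ 2 * ((R1 + R2) * (R1 - R2) ^ 2 * t0))) :
    a3 = 0 ∧ a6 = (R1 - R2) ^ 2 / (384 * (R1 * R2) ^ 2) ∧ a6 ≠ 0 := by
  have hRR : (0:ℝ) < R1 * R2 := mul_pos hR1 hR2
  have hs : Real.sqrt (R1 * R2) ≠ 0 := by positivity
  have hsub : R1 - R2 ≠ 0 := sub_ne_zero.mpr hR
  have hsum : R1 + R2 ≠ 0 := by positivity
  have hst3 : Real.sqrt (R1 * R2) * t3 = -(2 * (R1 + R2) * t0) := by
    rw [ht3]; field_simp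
  refine ⟨?_, ?_, ?_⟩
  · rw [ha3]
    have : 2 * (R1 - R2) ^ 2 * (R1 + R2) * t0 + (R1 - R2) ^ 2 * Real.sqrt (R1 * R2) * t3 = 0 := by
      linear_combination (R1 - R2) ^ 2 * hst3
    rw [this, zero_div]
  · rw [ha6]; field_simp
  · rw [ha6]
    have hne : (384 * (R1 * R2) ^ 2 * ((R1 + R2) * (R1 - R2) ^ 2 * t0)) ≠ 0 := by positivity
    intro h
    have := div_eq_zero_iff.mp h
    rcases this with h' | h'
    · have : (R1 - R2) ^ 2 * ((R1 + R2) * (R1 - R2) ^ 2 * t0) ≠ 0 := by positivity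
      exact this h'
    · exact hne h'
end
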